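/- Let V be a finite-dimensional vector space over a field k and let u, v : V → V be commuting linear endomorphisms. The condition Im(v restricted to ker(u)) = Im(v) ∩ ker(u) holds if and only if the symmetric condition Im(u restricted to ker(v)) = Im(u) ∩ ker(v) holds. -/
import Mathlib

open Submodule LinearMap FiniteDimensional

lemma strictness_aux {k V : Type*} [Field k] [AddCommGroup V] [Module k V]
    [FiniteDimensional k V] (u v : V →ₗ[k] V) (hcomm : u ∘ₗ v = v ∘ₗ u) :
    (Submodule.map v (LinearMap.ker u) = LinearMap.range v ⊓ LinearMap.ker u) ↔
    Module.finrank k (LinearMap.ker u) + Module.finrank k (LinearMap.ker v)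
      + Module.finrank k (LinearMap.range (u ∘ₗ v))
    = Module.finrank k V + Module.finrank k (LinearMap.ker u ⊓ LinearMap.ker v : Submodule k V) := by
  have hle : Submodule.map v (LinearMap.ker u) ≤ LinearMap.range v ⊓ LinearMap.ker u := by
    rintro x ⟨y, hy, rfl⟩
    refine ⟨⟨y, rfl⟩, ?_⟩
    have : (u ∘ₗ v) y = (v ∘ₗ u) y := by rw [hcomm]
    simp only [LinearMap.coe_comp, Function.comp_apply] at this
    simp [LinearMap.mem_ker, this, LinearMap.mem_ker.mp hy]
  -- rank-nullity for v restricted to ker u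
  have h1 : Module.finrank k (Submodule.map v (LinearMap.ker u))
      + Module.finrank k (LinearMap.ker u ⊓ LinearMap.ker v : Submodule k V)
      = Module.finrank k (LinearMap.ker u) := by
    have := LinearMap.finrank_range_add_finrank_ker (v ∘ₗ (LinearMap.ker u).subtype)
    rw [LinearMap.range_comp, Submodule.range_subtype] at this
    have hker : LinearMap.ker (v ∘ₗ (LinearMap.ker u).subtype)
        = Submodule.comap (LinearMap.ker u).subtype (LinearMap.ker v ⊓ LinearMap.ker u) := by
      rw [LinearMap.ker_comp, Submodule.comap_inf, Submodule.comap_subtype_self, inf_top_eq]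
    rw [hker] at this
    have hequiv := (Submodule.comapSubtypeEquivOfLe
      (inf_le_right : LinearMap.ker v ⊓ LinearMap.ker u ≤ LinearMap.ker u)).finrank_eq
    rw [hequiv, inf_comm (LinearMap.ker v)] at this
    exact this
  -- rank-nullity for u restricted to range v
  have h2 : Module.finrank k (LinearMap.range v ⊓ LinearMap.ker u : Submodule k V)
      + Module.finrank k (LinearMap.range (u ∘ₗ v))
      = Module.finrank k (LinearMap.range v) := by
    have := LinearMap.finrank_range_add_finrank_ker (u ∘ₗ (LinearMap.range v).subtype)
    rw [LinearMap.range_comp, Submodule.range_subtype, ← LinearMap.range_comp] at this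
    have hker : LinearMap.ker (u ∘ₗ (LinearMap.range v).subtype)
        = Submodule.comap (LinearMap.range v).subtype (LinearMap.ker u ⊓ LinearMap.range v) := by
      rw [LinearMap.ker_comp, Submodule.comap_inf, Submodule.comap_subtype_self, inf_top_eq]
    rw [hker] at this
    have hequiv := (Submodule.comapSubtypeEquivOfLe
      (inf_le_right : LinearMap.ker u ⊓ LinearMap.range v ≤ LinearMap.range v)).finrank_eq
    rw [hequiv, inf_comm (LinearMap.ker u)] at this
    omega
  have h3 : Module.finrank k (LinearMap.range v) + Module.finrank k (LinearMap.ker v)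
      = Module.finrank k V := LinearMap.finrank_range_add_finrank_ker v
  constructor
  · intro h
    rw [h] at h1
    omega
  · intro h
    have hfr : Module.finrank k (LinearMap.range v ⊓ LinearMap.ker u : Submodule k V)
        ≤ Module.finrank k (Submodule.map v (LinearMap.ker u)) := by omega
    exact Submodule.eq_of_le_of_finrank_le hle hfr

/-- Symmetry of the strictness condition (Prop. 4.4 of Pantev–Toën):
for commuting endomorphisms `u v` of a finite-dimensional vector space,
`Im(v|_{ker u}) = Im v ⊓ ker u` iff `Im(u|_{ker v}) = Im u ⊓ ker v`. -/
theorem strictness_symm {k V : Type*} [Field k] [AddCommGroup V] [Module k V]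
    [FiniteDimensional k V] (u v : V →ₗ[k] V) (hcomm : u ∘ₗ v = v ∘ₗ u) :
    (Submodule.map v (LinearMap.ker u) = LinearMap.range v ⊓ LinearMap.ker u) ↔
    (Submodule.map u (LinearMap.ker v) = LinearMap.range u ⊓ LinearMap.ker v) := by
  rw [strictness_aux u v hcomm, strictness_aux v u hcomm.symm, ← hcomm,
    inf_comm (LinearMap.ker v)]
  omega
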